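/- (Lemma 3.2) For all x, t ∈ ℝ: 0 < G(x,t) ≤ e^{−|t−x|} and 0 < G(x,t) ≤ (3/2)·d(x)·e^{−|t−x|}; moreover |u'(x)|·v(t) ≤ e^{−|t−x|} whenever x > t, and v'(x)·u(t) ≤ e^{−|t−x|} whenever x < t (i.e. |∂G(x,t)/∂x| ≤ e^{−|t−x|} for x ≠ t). -/

import Mathlib

open MeasureTheory Filter Real Set
open scoped ENNReal

noncomputable section

/-- Condition (1.5): for every `a > 0`, `∫_{x-a}^{x+a} q(t) dt → ∞` as `|x| → ∞`. -/
def Cond15 (q : ℝ → ℝ) : Prop :=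
  ∀ a : ℝ, 0 < a → Tendsto (fun x => ∫ t in (x - a)..(x + a), q t) (cocompact ℝ) atTop

/-- `(u, v)` is a principal fundamental system of solutions (PFSS) of `z'' = q z`.
Local absolute continuity of `u'` together with `u'' = q u` a.e. is encoded via the
fundamental theorem of calculus: `u' b - u' a = ∫_a^b q t * u t dt` for all `a, b`. -/
def IsPFSS (q u v : ℝ → ℝ) : Prop :=
  ContDiff ℝ 1 u ∧ ContDiff ℝ 1 v ∧
  (∀ a b : ℝ, deriv u b - deriv u a = ∫ t in a..b, q t * u t) ∧
  (∀ a b : ℝ, deriv v b - deriv v a = ∫ t in a..b, q t * v t) ∧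
  (∀ x, 0 < u x) ∧ (∀ x, 0 < v x) ∧
  (∀ x, deriv u x < 0) ∧ (∀ x, 0 < deriv v x) ∧
  (∀ x, deriv v x * u x - deriv u x * v x = 1) ∧
  (∀ x, u x = v x * ∫ t in Set.Ioi x, ((v t) ^ 2)⁻¹) ∧
  Tendsto u atTop (nhds 0) ∧ Tendsto (deriv u) atTop (nhds 0) ∧
  Tendsto v atTop atTop ∧ Tendsto (deriv v) atTop atTop ∧
  Tendsto v atBot (nhds 0) ∧ Tendsto (deriv v) atBot (nhds 0) ∧
  Tendsto u atBot atTop ∧ Tendsto (fun x => |deriv u x|) atBot atTop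

/-- The Green function: `G(x,t) = u(x) v(t)` for `x ≥ t`, `G(x,t) = u(t) v(x)` for `x ≤ t`. -/
def GreenFn (u v : ℝ → ℝ) (x t : ℝ) : ℝ := if x ≤ t then u t * v x else u x * v t

/-- The Green operator `(Gf)(x) = ∫_ℝ G(x,t) f(t) dt`. -/
def GreenOp (u v f : ℝ → ℝ) (x : ℝ) : ℝ := ∫ t, GreenFn u v x t * f t

lemma aux_comp (w : ℝ → ℝ) (hw : ContDiff ℝ 1 w)
    (hint : ∀ a b : ℝ, a ≤ b → (∫ t in a..b, w t) ≤ deriv w b - deriv w a)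
    (h0 : Tendsto (fun s => w s - deriv w s) atBot (nhds 0)) :
    ∀ s, w s ≤ deriv w s := by
  by_contra hc
  push_neg at hc
  obtain ⟨x0, hx0⟩ := hc
  set h : ℝ → ℝ := fun s => w s - deriv w s with hh
  have hx0pos : 0 < h x0 := by simpa [hh] using hx0
  have hcont : Continuous h := hw.continuous.sub (hw.continuous_deriv le_rfl)
  have hwint : ∀ a b : ℝ, IntervalIntegrable w volume a b :=
    fun a b => hw.continuous.intervalIntegrable a b
  have hw'int : ∀ a b : ℝ, IntervalIntegrable (deriv w) volume a b :=
    fun a b => (hw.continuous_deriv le_rfl).intervalIntegrable a b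
  have hftc : ∀ a b : ℝ, w b - w a = ∫ t in a..b, deriv w t := by
    intro a b
    rw [intervalIntegral.integral_deriv_eq_sub (fun t _ => (hw.differentiable one_ne_zero t)) (hw'int a b)]
  have key : ∀ a b : ℝ, a ≤ b → h b + (∫ t in a..b, h t) ≤ h a := by
    intro a b hab
    have h1 := hint a b hab
    have h2 := hftc a b
    have h3 : (∫ t in a..b, h t) = (∫ t in a..b, w t) - ∫ t in a..b, deriv w t := by
      simp [hh, intervalIntegral.integral_sub (hwint a b) (hw'int a b)]
    simp only [hh]
    linarith
  -- h is ≥ h x0 on Iic x0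
  have claim : ∀ s, s ≤ x0 → h x0 ≤ h s := by
    by_cases hS : {s : ℝ | s ≤ x0 ∧ h s ≤ 0}.Nonempty
    · exfalso
      set S := {s : ℝ | s ≤ x0 ∧ h s ≤ 0} with hSdef
      have hSc : IsClosed S := by
        have : S = (Iic x0) ∩ (h ⁻¹' Iic 0) := by ext s; simp [hSdef]
        rw [this]
        exact isClosed_Iic.inter (isClosed_Iic.preimage hcont)
      have hSb : BddAbove S := ⟨x0, fun s hs => hs.1⟩
      set c := sSup S with hc
      have hcS : c ∈ S := hSc.csSup_mem hS hSb
      have hcneg : h c ≤ 0 := hcS.2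
      have hclt : c < x0 := lt_of_le_of_ne hcS.1 (by intro he; rw [he] at hcneg; linarith)
      have pos_on : ∀ s ∈ Ioc c x0, h x0 ≤ h s := by
        intro s hs
        have hnn : ∀ t ∈ Icc s x0, 0 ≤ h t := by
          intro t ht
          by_contra hneg
          push_neg at hneg
          have : t ∈ S := ⟨ht.2, hneg.le⟩
          exact absurd (le_csSup hSb this) (by linarith [hs.1, ht.1] : ¬ t ≤ c)
        have hik : h x0 + (∫ t in s..x0, h t) ≤ h s := key s x0 hs.2
        have : 0 ≤ ∫ t in s..x0, h t :=
          intervalIntegral.integral_nonneg hs.2 (fun t ht => hnn t ht)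
        linarith
      have hlim : Tendsto h (nhdsWithin c (Ioi c)) (nhds (h c)) :=
        (hcont.continuousAt).continuousWithinAt
      have hev : ∀ᶠ s in nhdsWithin c (Ioi c), h x0 ≤ h s := by
        filter_upwards [Ioc_mem_nhdsGT_of_mem ⟨le_refl c, hclt⟩] with s hs
        exact pos_on s hs
      have : h x0 ≤ h c := ge_of_tendsto hlim hev
      linarith
    · intro s hs
      have hnn : ∀ t ∈ Icc s x0, 0 ≤ h t := by
        intro t ht
        by_contra hneg
        push_neg at hneg
        exact hS ⟨t, ht.2, hneg.le⟩
      have hik := key s x0 hs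
      have : 0 ≤ ∫ t in s..x0, h t :=
        intervalIntegral.integral_nonneg hs (fun t ht => hnn t ht)
      linarith
  have ev1 : ∀ᶠ s in atBot, h s < h x0 := by
    have := h0
    rw [hh] at this
    exact this.eventually_lt_const hx0pos
  obtain ⟨s, h1, h2⟩ := (ev1.and (eventually_le_atBot x0)).exists
  linarith [claim s h2]

lemma alg_lemma (U V P Q A B D : ℝ) (hUp : 0 < U) (hVp : 0 < V) (hPp : 0 < P) (hQp : 0 < Q)
    (hD : 0 < D) (hAp : 0 < A) (hBp : 0 < B)
    (hWx : Q * U + P * V = 1) (hABD : D * (B + A) = 2)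
    (i1 : U * A ≤ P * (1 + D * A)) (i2 : V * B ≤ Q * (1 + D * B)) :
    U * V ≤ 3 / 2 * D := by
  have c1 : U * A * (V * (1 + D * B)) ≤ P * (1 + D * A) * (V * (1 + D * B)) :=
    mul_le_mul_of_nonneg_right i1 (by positivity)
  have c2 : V * B * (U * (1 + D * A)) ≤ Q * (1 + D * B) * (U * (1 + D * A)) :=
    mul_le_mul_of_nonneg_right i2 (by positivity)
  have csum : U * V * (A + B + 2 * D * A * B) ≤ (1 + D * A) * (1 + D * B) := by
    have e1 : U * V * (A + B + 2 * D * A * B)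
        = U * A * (V * (1 + D * B)) + V * B * (U * (1 + D * A)) := by ring
    rw [e1]
    calc U * A * (V * (1 + D * B)) + V * B * (U * (1 + D * A))
        ≤ P * (1 + D * A) * (V * (1 + D * B)) + Q * (1 + D * B) * (U * (1 + D * A)) :=
          add_le_add c1 c2
      _ = (1 + D * A) * (1 + D * B) := by
          linear_combination ((1 + D * A) * (1 + D * B)) * hWx
  have hexp : (1 + D * A) * (1 + D * B) = 3 + D ^ 2 * A * B := by
    linear_combination hABD
  have t1 := mul_le_mul_of_nonneg_right csum hD.le
  have e4 : 2 * (U * V) * (1 + D ^ 2 * A * B) = U * V * (A + B + 2 * D * A * B) * D := by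
    linear_combination (-(U * V)) * hABD
  have m : 2 * (U * V) * (1 + D ^ 2 * A * B) ≤ D * (3 + D ^ 2 * A * B) := by
    rw [e4]
    calc U * V * (A + B + 2 * D * A * B) * D ≤ (1 + D * A) * (1 + D * B) * D := t1
      _ = D * (3 + D ^ 2 * A * B) := by rw [hexp]; ring
  have hs : 0 ≤ D ^ 2 * A * B := by positivity
  nlinarith [m, hs, hD, mul_nonneg hs hD.le]

/-- Lemma 3.2: `0 < G(x,t) ≤ e^{-|t-x|}`, `0 < G(x,t) ≤ (3/2) d(x) e^{-|t-x|}`, and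
`|∂G(x,t)/∂x| ≤ e^{-|t-x|}` for `x ≠ t`. -/
theorem lemma_3_2 (q u v : ℝ → ℝ) (hq_loc : LocallyIntegrable q) (hq : ∀ x, 1 ≤ q x)
    (huv : IsPFSS q u v) (d : ℝ → ℝ)
    (hd : ∀ x, 0 < d x ∧ (2 : ℝ) = d x * ∫ t in (x - d x)..(x + d x), q t) :
    (∀ x t : ℝ, 0 < GreenFn u v x t ∧ GreenFn u v x t ≤ Real.exp (-|t - x|)) ∧
    (∀ x t : ℝ, GreenFn u v x t ≤ (3 / 2) * d x * Real.exp (-|t - x|)) ∧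
    (∀ x t : ℝ, t < x → |deriv u x| * v t ≤ Real.exp (-|t - x|)) ∧
    (∀ x t : ℝ, x < t → deriv v x * u t ≤ Real.exp (-|t - x|)) := by
  obtain ⟨hu1, hv1, hiu, hiv, hupos, hvpos, hu'neg, hv'pos, hW, hrep,
    huT, hu'T, hvT, hv'T, hvB, hv'B, huB, hu'B⟩ := huv
  have hucont : Continuous u := hu1.continuous
  have hvcont : Continuous v := hv1.continuous
  have hu'cont : Continuous (deriv u) := hu1.continuous_deriv le_rfl
  have hv'cont : Continuous (deriv v) := hv1.continuous_deriv le_rfl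
  -- interval integrability facts
  have hqInt : ∀ a b : ℝ, IntervalIntegrable q volume a b := by
    intro a b
    exact (hq_loc.integrableOn_isCompact isCompact_uIcc).intervalIntegrable
  have hqmul : ∀ (f : ℝ → ℝ), Continuous f → ∀ a b : ℝ,
      IntervalIntegrable (fun t => q t * f t) volume a b := by
    intro f hf a b
    exact ((hq_loc.integrableOn_isCompact isCompact_uIcc).mul_continuousOn
      (hf.continuousOn) isCompact_uIcc).intervalIntegrable
  -- F1 : v ≤ v'
  have F1 : ∀ s, v s ≤ deriv v s := by
    apply aux_comp v hv1
    · intro a b hab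
      rw [hiv a b]
      apply intervalIntegral.integral_mono_on hab (hvcont.intervalIntegrable a b)
        (hqmul v hvcont a b)
      intro t ht
      nlinarith [hvpos t, hq t]
    · have := hvB.sub hv'B
      simpa using this
  -- F2 : u' ≤ -u, via reflection
  have F2 : ∀ s, u s ≤ -deriv u s := by
    have hw : ContDiff ℝ 1 (fun s : ℝ => u (-s)) := hu1.comp (contDiff_id.neg)
    have hwderiv : ∀ s, deriv (fun s : ℝ => u (-s)) s = -deriv u (-s) := by
      intro s; exact deriv_comp_neg u s
    have key := aux_comp (fun s : ℝ => u (-s)) hw ?_ ?_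
    · intro s
      have := key (-s)
      rw [hwderiv] at this
      simpa using this
    · intro a b hab
      rw [hwderiv, hwderiv]
      have h1 : (∫ t in a..b, u (-t)) = ∫ t in (-b)..(-a), u t :=
        intervalIntegral.integral_comp_neg u
      rw [h1]
      have h2 : deriv u (-a) - deriv u (-b) = ∫ t in (-b)..(-a), q t * u t := hiu (-b) (-a)
      have h3 : (∫ t in (-b)..(-a), u t) ≤ ∫ t in (-b)..(-a), q t * u t := by
        apply intervalIntegral.integral_mono_on (by linarith) (hucont.intervalIntegrable _ _)
          (hqmul u hucont _ _)
        intro t ht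
        nlinarith [hupos t, hq t]
      linarith
    · have hneg : Tendsto (fun s : ℝ => -s) atBot atTop := tendsto_neg_atBot_atTop
      have h4 : Tendsto (fun y => u y + deriv u y) atTop (nhds 0) := by
        simpa using huT.add hu'T
      have h5 : Tendsto (fun s : ℝ => u (-s) + deriv u (-s)) atBot (nhds 0) := h4.comp hneg
      have heq : (fun s : ℝ => u (-s) - deriv (fun s => u (-s)) s)
          = fun s : ℝ => u (-s) + deriv u (-s) := funext fun s => by rw [hwderiv s]; ring
      rw [heq]
      exact h5
  -- monotone exp facts
  have hVexp : ∀ t x : ℝ, t ≤ x → v t ≤ v x * Real.exp (t - x) := by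
    have hmono : Monotone (fun s => v s * Real.exp (-s)) := by
      apply monotone_of_deriv_nonneg
      · exact (hv1.differentiable one_ne_zero).mul (Real.differentiable_exp.comp differentiable_neg)
      · intro s
        have hd1 : HasDerivAt (fun s : ℝ => v s * Real.exp (-s))
            (deriv v s * Real.exp (-s) + v s * (Real.exp (-s) * (-1))) s := by
          exact ((hv1.differentiable one_ne_zero s).hasDerivAt).mul
            (((hasDerivAt_id s).neg).exp)
        rw [hd1.deriv]
        have := F1 s
        nlinarith [Real.exp_pos (-s)]
    intro t x htx
    have h1 := hmono htx
    have h2 : v t * Real.exp (-t) * Real.exp t ≤ v x * Real.exp (-x) * Real.exp t :=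
      mul_le_mul_of_nonneg_right h1 (Real.exp_pos t).le
    calc v t = v t * Real.exp (-t) * Real.exp t := by
          rw [mul_assoc, ← Real.exp_add]; simp
      _ ≤ v x * Real.exp (-x) * Real.exp t := h2
      _ = v x * Real.exp (t - x) := by
          rw [mul_assoc, ← Real.exp_add]; ring_nf
  have hUexp : ∀ t x : ℝ, t ≤ x → u x ≤ u t * Real.exp (t - x) := by
    have hanti : Antitone (fun s => u s * Real.exp s) := by
      apply antitone_of_deriv_nonpos
      · exact (hu1.differentiable one_ne_zero).mul Real.differentiable_exp
      · intro s
        have hd1 : HasDerivAt (fun s : ℝ => u s * Real.exp s)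
            (deriv u s * Real.exp s + u s * Real.exp s) s :=
          ((hu1.differentiable one_ne_zero s).hasDerivAt).mul (Real.hasDerivAt_exp s)
        rw [hd1.deriv]
        have := F2 s
        nlinarith [Real.exp_pos s]
    intro t x htx
    have h1 := hanti htx
    have h2 : u x * Real.exp x * Real.exp (-x) ≤ u t * Real.exp t * Real.exp (-x) :=
      mul_le_mul_of_nonneg_right h1 (Real.exp_pos (-x)).le
    calc u x = u x * Real.exp x * Real.exp (-x) := by
          rw [mul_assoc, ← Real.exp_add]; simp
      _ ≤ u t * Real.exp t * Real.exp (-x) := h2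
      _ = u t * Real.exp (t - x) := by
          rw [mul_assoc, ← Real.exp_add]; ring_nf
  have hRho : ∀ s, u s * v s ≤ 1 / 2 := by
    intro s
    nlinarith [hW s, F1 s, F2 s, hupos s, hvpos s]
  have hPv : ∀ s, -deriv u s * v s ≤ 1 := by
    intro s
    nlinarith [hW s, mul_pos (hv'pos s) (hupos s)]
  have hQu : ∀ s, deriv v s * u s ≤ 1 := by
    intro s
    nlinarith [hW s, mul_pos (neg_pos.2 (hu'neg s)) (hvpos s)]
  -- the bound rho(x) ≤ (3/2) d(x)
  have hRhoD : ∀ x, u x * v x ≤ 3 / 2 * d x := by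
    intro x
    obtain ⟨hD, hDint⟩ := hd x
    set D := d x with hDdef
    set A := ∫ t in x..(x + D), q t with hA
    set B := ∫ t in (x - D)..x, q t with hB
    have hadj : B + A = ∫ t in (x - D)..(x + D), q t :=
      intervalIntegral.integral_add_adjacent_intervals (hqInt _ _) (hqInt _ _)
    have hABD : D * (B + A) = 2 := by rw [hadj]; linarith
    have hAge : D ≤ A := by
      have h1 : (∫ t in x..(x + D), (1 : ℝ)) ≤ A := by
        apply intervalIntegral.integral_mono_on (by linarith)
          (intervalIntegrable_const) (hqInt _ _)
        intro t _; exact hq t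
      simpa using h1
    have hBge : D ≤ B := by
      have h1 : (∫ t in (x - D)..x, (1 : ℝ)) ≤ B := by
        apply intervalIntegral.integral_mono_on (by linarith)
          (intervalIntegrable_const) (hqInt _ _)
        intro t _; exact hq t
      simpa using h1
    -- u' is monotone, v' is monotone
    have hu'mono : ∀ a b : ℝ, a ≤ b → deriv u a ≤ deriv u b := by
      intro a b hab
      have h1 : 0 ≤ ∫ t in a..b, q t * u t :=
        intervalIntegral.integral_nonneg hab
          (fun t _ => by nlinarith [hq t, hupos t])
      linarith [hiu a b]
    have hv'mono : ∀ a b : ℝ, a ≤ b → deriv v a ≤ deriv v b := by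
      intro a b hab
      have h1 : 0 ≤ ∫ t in a..b, q t * v t :=
        intervalIntegral.integral_nonneg hab
          (fun t _ => by nlinarith [hq t, hvpos t])
      linarith [hiv a b]
    have humonot : ∀ a b : ℝ, a ≤ b → u b ≤ u a := by
      intro a b hab
      have := hucont -- antitone
      exact (antitone_of_deriv_nonpos (hu1.differentiable one_ne_zero)
        (fun s => (hu'neg s).le)) hab
    have hftcu : ∀ a b : ℝ, u b - u a = ∫ t in a..b, deriv u t := by
      intro a b
      rw [intervalIntegral.integral_deriv_eq_sub (fun t _ => hu1.differentiable one_ne_zero t)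
        (hu'cont.intervalIntegrable a b)]
    have hftcv : ∀ a b : ℝ, v b - v a = ∫ t in a..b, deriv v t := by
      intro a b
      rw [intervalIntegral.integral_deriv_eq_sub (fun t _ => hv1.differentiable one_ne_zero t)
        (hv'cont.intervalIntegrable a b)]
    -- h1 : u x + D * deriv u x ≤ u (x + D)
    have h1 : u x + D * deriv u x ≤ u (x + D) := by
      have e1 : u (x + D) - u x = ∫ t in x..(x + D), deriv u t := hftcu x (x + D)
      have e2 : (∫ t in x..(x + D), deriv u x) ≤ ∫ t in x..(x + D), deriv u t := by
        apply intervalIntegral.integral_mono_on (by linarith)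
          intervalIntegrable_const (hu'cont.intervalIntegrable _ _)
        intro t ht; exact hu'mono x t ht.1
      simp only [intervalIntegral.integral_const, smul_eq_mul] at e2
      have : (x + D - x) * deriv u x = D * deriv u x := by ring_nf
      linarith [e2, e1]
    -- h2 : u (x + D) * A ≤ -deriv u x
    have h2 : u (x + D) * A ≤ -deriv u x := by
      have e1 : deriv u (x + D) - deriv u x = ∫ t in x..(x + D), q t * u t := hiu x (x + D)
      have e2 : (∫ t in x..(x + D), q t * u (x + D)) ≤ ∫ t in x..(x + D), q t * u t := by
        apply intervalIntegral.integral_mono_on (by linarith)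
          ((hqInt x (x + D)).mul_const _) (hqmul u hucont _ _)
        intro t ht
        have hqt : 0 ≤ q t := le_trans zero_le_one (hq t)
        exact mul_le_mul_of_nonneg_left (humonot t (x + D) ht.2) hqt
      rw [intervalIntegral.integral_mul_const] at e2
      have e3 : deriv u (x + D) < 0 := hu'neg (x + D)
      linarith
    -- h3 : v (x - D) * B ≤ deriv v x
    have h3 : v (x - D) * B ≤ deriv v x := by
      have e1 : deriv v x - deriv v (x - D) = ∫ t in (x - D)..x, q t * v t := hiv (x - D) x
      have e2 : (∫ t in (x - D)..x, q t * v (x - D)) ≤ ∫ t in (x - D)..x, q t * v t := by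
        apply intervalIntegral.integral_mono_on (by linarith)
          ((hqInt _ _).mul_const _) (hqmul v hvcont _ _)
        intro t ht
        have hqt : 0 ≤ q t := le_trans zero_le_one (hq t)
        have hmv : v (x - D) ≤ v t := by
          have := (monotone_of_deriv_nonneg (hv1.differentiable one_ne_zero)
            (fun s => (hv'pos s).le)) ht.1
          exact this
        exact mul_le_mul_of_nonneg_left hmv hqt
      rw [intervalIntegral.integral_mul_const] at e2
      have e3 : 0 < deriv v (x - D) := hv'pos (x - D)
      linarith
    -- h4 : v x - D * deriv v x ≤ v (x - D)
    have h4 : v x - D * deriv v x ≤ v (x - D) := by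
      have e1 : v x - v (x - D) = ∫ t in (x - D)..x, deriv v t := hftcv (x - D) x
      have e2 : (∫ t in (x - D)..x, deriv v t) ≤ ∫ t in (x - D)..x, deriv v x := by
        apply intervalIntegral.integral_mono_on (by linarith)
          (hv'cont.intervalIntegrable _ _) intervalIntegrable_const
        intro t ht; exact hv'mono t x ht.2
      simp only [intervalIntegral.integral_const, smul_eq_mul] at e2
      have e3 : (x - (x - D)) * deriv v x = D * deriv v x := by ring_nf
      linarith
    -- now pure algebra
    set U := u x with hU
    set V := v x with hV
    set P := -deriv u x with hP
    set Q := deriv v x with hQ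
    have hUp : 0 < U := hupos x
    have hVp : 0 < V := hvpos x
    have hPp : 0 < P := neg_pos.2 (hu'neg x)
    have hQp : 0 < Q := hv'pos x
    have hWx : Q * U + P * V = 1 := by
      have := hW x; simp only [hU, hV, hP, hQ]; linarith
    have hAp : 0 < A := lt_of_lt_of_le hD hAge
    have hBp : 0 < B := lt_of_lt_of_le hD hBge
    -- P (1 + D A) ≥ U A
    have i1 : U * A ≤ P * (1 + D * A) := by
      have : (U - D * P) * A ≤ u (x + D) * A := by
        apply mul_le_mul_of_nonneg_right _ hAp.le
        simp only [hU, hP]; linarith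
      nlinarith [h2]
    have i2 : V * B ≤ Q * (1 + D * B) := by
      have : (V - D * Q) * B ≤ v (x - D) * B := by
        apply mul_le_mul_of_nonneg_right _ hBp.le
        simp only [hV, hQ]; linarith
      nlinarith [h3]
    exact alg_lemma U V P Q A B D hUp hVp hPp hQp hD hAp hBp hWx hABD i1 i2
  have habs1 : ∀ x t : ℝ, x ≤ t → -|t - x| = x - t := by
    intro x t h; rw [abs_of_nonneg (by linarith : (0:ℝ) ≤ t - x)]; ring
  have habs2 : ∀ x t : ℝ, t ≤ x → -|t - x| = t - x := by
    intro x t h; rw [abs_of_nonpos (by linarith : t - x ≤ (0:ℝ))]; ring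
  refine ⟨?_, ?_, ?_, ?_⟩
  · intro x t
    constructor
    · unfold GreenFn
      split_ifs
      · exact mul_pos (hupos t) (hvpos x)
      · exact mul_pos (hupos x) (hvpos t)
    · by_cases hxt : x ≤ t
      · simp only [GreenFn, if_pos hxt]
        rw [show Real.exp (-|t - x|) = Real.exp (x - t) by rw [habs1 x t hxt]]
        calc u t * v x ≤ u x * Real.exp (x - t) * v x :=
              mul_le_mul_of_nonneg_right (hUexp x t hxt) (hvpos x).le
          _ = u x * v x * Real.exp (x - t) := by ring
          _ ≤ 1 / 2 * Real.exp (x - t) :=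
              mul_le_mul_of_nonneg_right (hRho x) (Real.exp_pos _).le
          _ ≤ Real.exp (x - t) := by nlinarith [Real.exp_pos (x - t)]
      · push_neg at hxt
        simp only [GreenFn, if_neg (not_le.2 hxt)]
        rw [show Real.exp (-|t - x|) = Real.exp (t - x) by rw [habs2 x t hxt.le]]
        calc u x * v t ≤ u t * Real.exp (t - x) * v t :=
              mul_le_mul_of_nonneg_right (hUexp t x hxt.le) (hvpos t).le
          _ = u t * v t * Real.exp (t - x) := by ring
          _ ≤ 1 / 2 * Real.exp (t - x) :=
              mul_le_mul_of_nonneg_right (hRho t) (Real.exp_pos _).le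
          _ ≤ Real.exp (t - x) := by nlinarith [Real.exp_pos (t - x)]
  · intro x t
    by_cases hxt : x ≤ t
    · simp only [GreenFn, if_pos hxt]
      rw [show Real.exp (-|t - x|) = Real.exp (x - t) by rw [habs1 x t hxt]]
      calc u t * v x ≤ u x * Real.exp (x - t) * v x :=
            mul_le_mul_of_nonneg_right (hUexp x t hxt) (hvpos x).le
        _ = u x * v x * Real.exp (x - t) := by ring
        _ ≤ 3 / 2 * d x * Real.exp (x - t) :=
            mul_le_mul_of_nonneg_right (by linarith [hRhoD x]) (Real.exp_pos _).le
    · push_neg at hxt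
      simp only [GreenFn, if_neg (not_le.2 hxt)]
      rw [show Real.exp (-|t - x|) = Real.exp (t - x) by rw [habs2 x t hxt.le]]
      calc u x * v t ≤ u x * (v x * Real.exp (t - x)) := by
            have := hVexp t x hxt.le
            exact mul_le_mul_of_nonneg_left this (hupos x).le
        _ = u x * v x * Real.exp (t - x) := by ring
        _ ≤ 3 / 2 * d x * Real.exp (t - x) :=
            mul_le_mul_of_nonneg_right (by linarith [hRhoD x]) (Real.exp_pos _).le
  · intro x t htx
    rw [show Real.exp (-|t - x|) = Real.exp (t - x) by rw [habs2 x t htx.le]]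
    rw [abs_of_neg (hu'neg x)]
    calc -deriv u x * v t ≤ -deriv u x * (v x * Real.exp (t - x)) :=
          mul_le_mul_of_nonneg_left (hVexp t x htx.le) (neg_pos.2 (hu'neg x)).le
      _ = -deriv u x * v x * Real.exp (t - x) := by ring
      _ ≤ 1 * Real.exp (t - x) :=
          mul_le_mul_of_nonneg_right (hPv x) (Real.exp_pos _).le
      _ = Real.exp (t - x) := one_mul _
  · intro x t hxt
    rw [show Real.exp (-|t - x|) = Real.exp (x - t) by rw [habs1 x t hxt.le]]
    calc deriv v x * u t ≤ deriv v x * (u x * Real.exp (x - t)) :=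
          mul_le_mul_of_nonneg_left (hUexp x t hxt.le) (hv'pos x).le
      _ = deriv v x * u x * Real.exp (x - t) := by ring
      _ ≤ 1 * Real.exp (x - t) :=
          mul_le_mul_of_nonneg_right (hQu x) (Real.exp_pos _).le
      _ = Real.exp (x - t) := one_mul _
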